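/- Let x be a feasible fractional solution to the NODE-LP on a binary tree T with exactly one deficient path P = u_1u_2…u_j, and let k be such that 3k·x is integral. In the path-coloring phase (Algorithm 3), each edge of P, at the moment it is processed, either already has all 2k colors or all colored links covering it have pairwise distinct colors; hence after processing, every edge of P is covered by links of all 2k distinct colors. -/

import Mathlib

/-- A link with endpoints `u`, `w` covers a tree edge `e` if `e` lies on the
(unique) path between `u` and `w` in the tree `G`. -/
def Covers {V : Type*} (G : SimpleGraph V) (u w : V) (e : Sym2 V) : Prop :=
  ∃ p : G.Walk u w, p.IsPath ∧ e ∈ p.edges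

open Classical in
/-- `x(δ(e))`: total fractional weight of links covering the tree edge `e`. -/
noncomputable def covWeight {V : Type*} [Fintype V] (G : SimpleGraph V)
    (x : V × V → ℝ) (e : Sym2 V) : ℝ :=
  ∑ ℓ ∈ Finset.univ.filter (fun ℓ : V × V => Covers G ℓ.1 ℓ.2 e), x ℓ

open Classical in
/-- `x(δ(e1) ∪ δ(e2) ∪ δ(e3))`: total weight of links covering one of three edges. -/
noncomputable def tripleWeight {V : Type*} [Fintype V] (G : SimpleGraph V)
    (x : V × V → ℝ) (e1 e2 e3 : Sym2 V) : ℝ :=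
  ∑ ℓ ∈ Finset.univ.filter (fun ℓ : V × V =>
      Covers G ℓ.1 ℓ.2 e1 ∨ Covers G ℓ.1 ℓ.2 e2 ∨ Covers G ℓ.1 ℓ.2 e3), x ℓ

/- STATEMENT 18: one deficient path.  If `x` is NODE-LP feasible, the deficient
edges (`x(δ(e)) < 4/3`) are exactly the edge set `P` of a single path, and
`3k·x` is integral, then the path-coloring phase produces a partial coloring of
the `3k·x_ℓ` copies of the links (at most `3k·x_ℓ` colored copies of each link
`ℓ`) under which every edge of `P` is covered by links of all `2k` colors. -/

open Finset SimpleGraph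

section Abstract

variable {ι : Type*} [Fintype ι] [DecidableEq ι]

open Classical in
/-- Invariant of the greedy coloring after (partially) processing up to edge `T`. -/
def GreedyInv (m : ι → ℕ) (cov : ι → ℕ → Prop) (K : ℕ)
    (A : ι → Finset (Fin K)) (T : ℕ) : Prop :=
  (∀ ℓ, (A ℓ).card ≤ m ℓ) ∧
  (∀ ℓ, (A ℓ).Nonempty → ∃ s ≤ T, cov ℓ s) ∧
  (∀ (c : Fin K) ℓ1 ℓ2, ℓ1 ≠ ℓ2 → c ∈ A ℓ1 → c ∈ A ℓ2 →
    ∀ i, T ≤ i → ¬(cov ℓ1 i ∧ cov ℓ2 i))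

open Classical in
lemma greedy_step {m : ι → ℕ} {cov : ι → ℕ → Prop} {K : ℕ}
    (hint : ∀ ℓ i j l, i ≤ j → j ≤ l → cov ℓ i → cov ℓ l → cov ℓ j)
    {t : ℕ} (hcovg : K ≤ ∑ ℓ ∈ Finset.univ.filter (fun ℓ => cov ℓ t), m ℓ)
    {A : ι → Finset (Fin K)} (hInv : GreedyInv m cov K A t)
    {c : Fin K} (hmiss : ¬ ∃ ℓ, cov ℓ t ∧ c ∈ A ℓ) :
    ∃ A', GreedyInv m cov K A' t ∧ (∀ ℓ, A ℓ ⊆ A' ℓ) ∧ ∃ ℓ, cov ℓ t ∧ c ∈ A' ℓ := by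
  obtain ⟨hcard, hH, hD⟩ := hInv
  set S : Finset ι := Finset.univ.filter (fun ℓ => cov ℓ t) with hS
  -- find a link covering t with spare capacity
  have hdisj : ∀ ℓ1 ∈ S, ∀ ℓ2 ∈ S, ℓ1 ≠ ℓ2 → Disjoint (A ℓ1) (A ℓ2) := by
    intro ℓ1 h1 ℓ2 h2 hne
    rw [Finset.disjoint_left]
    intro c' hc1 hc2
    exact hD c' ℓ1 ℓ2 hne hc1 hc2 t le_rfl
      ⟨(Finset.mem_filter.mp h1).2, (Finset.mem_filter.mp h2).2⟩
  have hsub : S.biUnion A ⊆ Finset.univ.erase c := by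
    intro c' hc'
    obtain ⟨ℓ, hℓ, hc'⟩ := Finset.mem_biUnion.mp hc'
    refine Finset.mem_erase.mpr ⟨?_, Finset.mem_univ _⟩
    rintro rfl
    exact hmiss ⟨ℓ, (Finset.mem_filter.mp hℓ).2, hc'⟩
  have hKpos : 0 < K := c.pos
  have hex : ∃ ℓ0 ∈ S, (A ℓ0).card < m ℓ0 := by
    by_contra h
    push_neg at h
    have h1 : ∑ ℓ ∈ S, m ℓ ≤ ∑ ℓ ∈ S, (A ℓ).card :=
      Finset.sum_le_sum fun ℓ hℓ => h ℓ hℓ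
    have h2 : ∑ ℓ ∈ S, (A ℓ).card = (S.biUnion A).card := (Finset.card_biUnion hdisj).symm
    have h3 : (S.biUnion A).card ≤ K - 1 := by
      calc (S.biUnion A).card ≤ (Finset.univ.erase c).card := Finset.card_le_card hsub
        _ = K - 1 := by rw [Finset.card_erase_of_mem (Finset.mem_univ c)]; simp
    omega
  obtain ⟨ℓ0, hℓ0S, hℓ0⟩ := hex
  have hcov0 : cov ℓ0 t := (Finset.mem_filter.mp hℓ0S).2
  have hcnot : c ∉ A ℓ0 := fun hc => hmiss ⟨ℓ0, hcov0, hc⟩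
  refine ⟨Function.update A ℓ0 (insert c (A ℓ0)), ⟨?_, ?_, ?_⟩, ?_, ℓ0, hcov0, ?_⟩
  · intro ℓ
    by_cases hℓ : ℓ = ℓ0
    · subst hℓ
      rw [Function.update_self, Finset.card_insert_of_notMem hcnot]
      omega
    · rw [Function.update_of_ne hℓ]; exact hcard ℓ
  · intro ℓ hne
    by_cases hℓ : ℓ = ℓ0
    · exact ⟨t, le_rfl, hℓ ▸ hcov0⟩
    · rw [Function.update_of_ne hℓ] at hne; exact hH ℓ hne
  · intro c' ℓ1 ℓ2 hne hc1 hc2 i hti ⟨hcov1, hcov2⟩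
    -- characterize membership in the updated family
    have key : ∀ ℓ, c' ∈ Function.update A ℓ0 (insert c (A ℓ0)) ℓ →
        c' ∈ A ℓ ∨ (c' = c ∧ ℓ = ℓ0) := by
      intro ℓ hc'
      by_cases hℓ : ℓ = ℓ0
      · subst hℓ
        rw [Function.update_self, Finset.mem_insert] at hc'
        rcases hc' with h | h
        · exact Or.inr ⟨h, rfl⟩
        · exact Or.inl h
      · rw [Function.update_of_ne hℓ] at hc'; exact Or.inl hc'
    -- a link with an old color covering i ≥ t also covers t
    have old_covers_t : ∀ ℓ, c' ∈ A ℓ → cov ℓ i → cov ℓ t := by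
      intro ℓ hc hcov
      obtain ⟨s, hs, hcovs⟩ := hH ℓ ⟨c', hc⟩
      exact hint ℓ s t i hs hti hcovs hcov
    rcases key ℓ1 hc1 with h1 | ⟨rfl, rfl⟩
    · rcases key ℓ2 hc2 with h2 | ⟨rfl, rfl⟩
      · exact hD c' ℓ1 ℓ2 hne h1 h2 i hti ⟨hcov1, hcov2⟩
      · exact hmiss ⟨ℓ1, old_covers_t ℓ1 h1 hcov1, h1⟩
    · rcases key ℓ2 hc2 with h2 | ⟨hc, rfl⟩
      · exact hmiss ⟨ℓ2, old_covers_t ℓ2 h2 hcov2, h2⟩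
      · exact hne rfl
  · intro ℓ
    by_cases hℓ : ℓ = ℓ0
    · subst hℓ; rw [Function.update_self]; exact Finset.subset_insert _ _
    · rw [Function.update_of_ne hℓ]
  · rw [Function.update_self]; exact Finset.mem_insert_self _ _

open Classical in
lemma greedy_fill {m : ι → ℕ} {cov : ι → ℕ → Prop} {K : ℕ}
    (hint : ∀ ℓ i j l, i ≤ j → j ≤ l → cov ℓ i → cov ℓ l → cov ℓ j)
    {t : ℕ} (hcovg : K ≤ ∑ ℓ ∈ Finset.univ.filter (fun ℓ => cov ℓ t), m ℓ) :
    ∀ (n : ℕ) (A : ι → Finset (Fin K)), GreedyInv m cov K A t →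
      (Finset.univ.filter fun c : Fin K => ¬ ∃ ℓ, cov ℓ t ∧ c ∈ A ℓ).card ≤ n →
      ∃ A', GreedyInv m cov K A' t ∧ (∀ ℓ, A ℓ ⊆ A' ℓ) ∧
        ∀ c : Fin K, ∃ ℓ, cov ℓ t ∧ c ∈ A' ℓ := by
  intro n
  induction n with
  | zero =>
    intro A hInv hcardle
    refine ⟨A, hInv, fun ℓ => le_rfl, fun c => ?_⟩
    by_contra h
    have : c ∈ Finset.univ.filter fun c : Fin K => ¬ ∃ ℓ, cov ℓ t ∧ c ∈ A ℓ :=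
      Finset.mem_filter.mpr ⟨Finset.mem_univ _, h⟩
    have := Finset.card_pos.mpr ⟨c, this⟩
    omega
  | succ n ih =>
    intro A hInv hcardle
    by_cases hall : ∀ c : Fin K, ∃ ℓ, cov ℓ t ∧ c ∈ A ℓ
    · exact ⟨A, hInv, fun ℓ => le_rfl, hall⟩
    · push_neg at hall
      obtain ⟨c, hc⟩ := hall
      obtain ⟨A1, hInv1, hsub1, hc1⟩ := greedy_step hint hcovg hInv (by push_neg; exact hc)
      have hmono : ∀ c' : Fin K, (∃ ℓ, cov ℓ t ∧ c' ∈ A ℓ) → ∃ ℓ, cov ℓ t ∧ c' ∈ A1 ℓ :=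
        fun c' ⟨ℓ, h1, h2⟩ => ⟨ℓ, h1, hsub1 ℓ h2⟩
      have hstrict : (Finset.univ.filter fun c' : Fin K => ¬ ∃ ℓ, cov ℓ t ∧ c' ∈ A1 ℓ) ⊆
          (Finset.univ.filter fun c' : Fin K => ¬ ∃ ℓ, cov ℓ t ∧ c' ∈ A ℓ).erase c := by
        intro c' hc'
        rw [Finset.mem_filter] at hc'
        refine Finset.mem_erase.mpr ⟨?_, Finset.mem_filter.mpr ⟨Finset.mem_univ _,
          fun h => hc'.2 (hmono c' h)⟩⟩
        rintro rfl
        exact hc'.2 hc1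
      have hcmem : c ∈ Finset.univ.filter fun c' : Fin K => ¬ ∃ ℓ, cov ℓ t ∧ c' ∈ A ℓ :=
        Finset.mem_filter.mpr ⟨Finset.mem_univ _, fun h => hc h.choose h.choose_spec.1 h.choose_spec.2⟩
      have hlt : (Finset.univ.filter fun c' : Fin K => ¬ ∃ ℓ, cov ℓ t ∧ c' ∈ A1 ℓ).card ≤ n := by
        have := Finset.card_le_card hstrict
        rw [Finset.card_erase_of_mem hcmem] at this
        omega
      obtain ⟨A', hInv', hsub', hall'⟩ := ih A1 hInv1 hlt
      exact ⟨A', hInv', fun ℓ => (hsub1 ℓ).trans (hsub' ℓ), hall'⟩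

open Classical in
lemma greedy_coloring {K N : ℕ} {m : ι → ℕ} {cov : ι → ℕ → Prop}
    (hint : ∀ ℓ i j l, i ≤ j → j ≤ l → cov ℓ i → cov ℓ l → cov ℓ j)
    (hcovg : ∀ t < N, K ≤ ∑ ℓ ∈ Finset.univ.filter (fun ℓ => cov ℓ t), m ℓ) :
    ∃ A : ι → Finset (Fin K), (∀ ℓ, (A ℓ).card ≤ m ℓ) ∧
      ∀ t < N, ∀ c : Fin K, ∃ ℓ, cov ℓ t ∧ c ∈ A ℓ := by
  suffices h : ∀ T ≤ N, ∃ A : ι → Finset (Fin K), GreedyInv m cov K A T ∧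
      ∀ t < T, ∀ c : Fin K, ∃ ℓ, cov ℓ t ∧ c ∈ A ℓ by
    obtain ⟨A, hInv, hall⟩ := h N le_rfl
    exact ⟨A, hInv.1, hall⟩
  intro T
  induction T with
  | zero =>
    intro _
    refine ⟨fun _ => ∅, ⟨fun ℓ => by simp, fun ℓ h => absurd h (by simp [Finset.nonempty_iff_ne_empty]),
      fun c ℓ1 ℓ2 _ hc1 _ _ _ _ => absurd hc1 (Finset.notMem_empty c)⟩, fun t ht => by omega⟩
  | succ T ih =>
    intro hTN
    obtain ⟨A, hInv, hall⟩ := ih (by omega)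
    obtain ⟨A', hInv', hsub', hall'⟩ := greedy_fill hint (hcovg T (by omega))
      (Finset.univ.filter fun c : Fin K => ¬ ∃ ℓ, cov ℓ T ∧ c ∈ A ℓ).card A hInv le_rfl
    refine ⟨A', ⟨hInv'.1, fun ℓ h => ?_, fun c ℓ1 ℓ2 hne h1 h2 i hi => ?_⟩, fun t ht c => ?_⟩
    · obtain ⟨s, hs, hcov⟩ := hInv'.2.1 ℓ h
      exact ⟨s, by omega, hcov⟩
    · exact hInv'.2.2 c ℓ1 ℓ2 hne h1 h2 i (by omega)
    · rcases Nat.lt_succ_iff_lt_or_eq.mp ht with h | rfl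
      · obtain ⟨ℓ, h1, h2⟩ := hall t h c
        exact ⟨ℓ, h1, hsub' ℓ h2⟩
      · exact hall' c

end Abstract

section Graph

variable {V : Type*} {G : SimpleGraph V}

lemma walk_mem_edges_iff_getVert {u v : V} (w : G.Walk u v) (e : Sym2 V) :
    e ∈ w.edges ↔ ∃ i < w.length, e = s(w.getVert i, w.getVert (i + 1)) := by
  induction w with
  | nil => simp
  | @cons a b c h p ih =>
    rw [SimpleGraph.Walk.edges_cons, List.mem_cons]
    constructor
    · rintro (rfl | he)
      · exact ⟨0, by simp [SimpleGraph.Walk.length_cons],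
          by simp [SimpleGraph.Walk.getVert_zero, SimpleGraph.Walk.getVert_cons_succ]⟩
      · obtain ⟨i, hi, heq⟩ := ih.mp he
        exact ⟨i + 1, by simp [SimpleGraph.Walk.length_cons]; omega,
          by simpa [SimpleGraph.Walk.getVert_cons_succ] using heq⟩
    · rintro ⟨i, hi, rfl⟩
      cases i with
      | zero =>
        left
        simp [SimpleGraph.Walk.getVert_zero, SimpleGraph.Walk.getVert_cons_succ]
      | succ j =>
        right
        rw [SimpleGraph.Walk.length_cons] at hi
        exact ih.mpr ⟨j, by omega, by simp [SimpleGraph.Walk.getVert_cons_succ]⟩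

lemma subwalk_exists {u v : V} (w : G.Walk u v) (hw : w.IsPath) :
    ∀ s t : ℕ, s ≤ t → t ≤ w.length →
      ∃ r : G.Walk (w.getVert s) (w.getVert t), r.IsPath ∧
        (∀ x ∈ r.support, x ∈ w.support) ∧
        ∀ i, s ≤ i → i < t → s(w.getVert i, w.getVert (i + 1)) ∈ r.edges := by
  induction w with
  | nil =>
    intro s t hst ht
    simp only [SimpleGraph.Walk.length_nil, Nat.le_zero] at ht
    subst ht
    simp only [Nat.le_zero] at hst
    subst hst
    exact ⟨SimpleGraph.Walk.nil, SimpleGraph.Walk.IsPath.nil, by simp, fun i h1 h2 => by omega⟩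
  | @cons a b c h p ih =>
    intro s t hst ht
    cases t with
    | zero =>
      simp only [Nat.le_zero] at hst
      subst hst
      exact ⟨SimpleGraph.Walk.nil, SimpleGraph.Walk.IsPath.nil, by simp, fun i h1 h2 => by omega⟩
    | succ t' =>
      rw [SimpleGraph.Walk.length_cons] at ht
      cases s with
      | succ s' =>
        obtain ⟨r, hr, hrsup, hre⟩ := ih hw.of_cons s' t' (by omega) (by omega)
        refine ⟨r, hr, fun x hx => ?_, fun i h1 h2 => ?_⟩
        · rw [SimpleGraph.Walk.support_cons]
          exact List.mem_cons_of_mem _ (hrsup x hx)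
        · cases i with
          | zero => omega
          | succ i' =>
            simpa [SimpleGraph.Walk.getVert_cons_succ] using hre i' (by omega) (by omega)
      | zero =>
        obtain ⟨r, hr, hrsup, hre⟩ := ih hw.of_cons 0 t' (by omega) (by omega)
        have hb : p.getVert 0 = b := p.getVert_zero
        rw [SimpleGraph.Walk.getVert_zero, SimpleGraph.Walk.getVert_cons_succ]
        refine ⟨SimpleGraph.Walk.cons h (r.copy hb rfl), ?_, fun x hx => ?_, fun i h1 h2 => ?_⟩
        · rw [SimpleGraph.Walk.cons_isPath_iff]
          refine ⟨(SimpleGraph.Walk.isPath_copy r hb rfl).mpr hr, fun hmem => ?_⟩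
          rw [SimpleGraph.Walk.support_copy] at hmem
          exact ((SimpleGraph.Walk.cons_isPath_iff h p).mp hw).2 (hrsup a hmem)
        · rw [SimpleGraph.Walk.support_cons] at hx ⊢
          rcases List.mem_cons.mp hx with rfl | hx
          · exact List.mem_cons_self
          · rw [SimpleGraph.Walk.support_copy] at hx
            exact List.mem_cons_of_mem _ (hrsup x hx)
        · cases i with
          | zero =>
            rw [SimpleGraph.Walk.edges_cons, List.mem_cons]
            left
            simp [SimpleGraph.Walk.getVert_zero, SimpleGraph.Walk.getVert_cons_succ, hb]
          | succ i' =>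
            rw [SimpleGraph.Walk.edges_cons, List.mem_cons]
            right
            rw [SimpleGraph.Walk.edges_copy]
            simpa [SimpleGraph.Walk.getVert_cons_succ] using hre i' (by omega) (by omega)

lemma path_between_support {a b : V} (q : G.Walk a b) (hq : q.IsPath) {x y : V}
    (hx : x ∈ q.support) (hy : y ∈ q.support) :
    ∃ r : G.Walk x y, r.IsPath ∧ ∀ e ∈ r.edges, e ∈ q.edges := by
  obtain ⟨q1, q2, rfl⟩ := SimpleGraph.Walk.mem_support_iff_exists_append.mp hx
  rw [SimpleGraph.Walk.mem_support_append_iff] at hy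
  rcases hy with hy | hy
  · -- y ∈ q1.support, go backwards
    obtain ⟨q5, q6, rfl⟩ := SimpleGraph.Walk.mem_support_iff_exists_append.mp hy
    refine ⟨q6.reverse, (hq.of_append_left.of_append_right).reverse, fun e he => ?_⟩
    rw [SimpleGraph.Walk.edges_reverse, List.mem_reverse] at he
    rw [SimpleGraph.Walk.edges_append, SimpleGraph.Walk.edges_append]
    exact List.mem_append_left _ (List.mem_append_right _ he)
  · obtain ⟨q3, q4, rfl⟩ := SimpleGraph.Walk.mem_support_iff_exists_append.mp hy
    refine ⟨q3, hq.of_append_right.of_append_left, fun e he => ?_⟩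
    rw [SimpleGraph.Walk.edges_append, SimpleGraph.Walk.edges_append]
    exact List.mem_append_right _ (List.mem_append_left _ he)

lemma covers_interval (hT : G.IsTree) {u v : V} (w : G.Walk u v) (hw : w.IsPath)
    (a b : V) (i j l : ℕ) (hij : i ≤ j) (hjl : j ≤ l) (hl : l < w.length)
    (hci : Covers G a b s(w.getVert i, w.getVert (i + 1)))
    (hcl : Covers G a b s(w.getVert l, w.getVert (l + 1))) :
    Covers G a b s(w.getVert j, w.getVert (j + 1)) := by
  rcases eq_or_lt_of_le hij with rfl | hij'
  · exact hci
  rcases eq_or_lt_of_le hjl with rfl | hjl'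
  · exact hcl
  obtain ⟨qi, hqi, hei⟩ := hci
  obtain ⟨ql, hql, hel⟩ := hcl
  have hq_eq : qi = ql := (hT.existsUnique_path a b).unique hqi hql
  subst hq_eq
  have hx : w.getVert (i + 1) ∈ qi.support := qi.snd_mem_support_of_mem_edges hei
  have hy : w.getVert l ∈ qi.support := qi.fst_mem_support_of_mem_edges hel
  obtain ⟨m, hm, hmsup, hme⟩ := subwalk_exists w hw (i + 1) l (by omega) (by omega)
  obtain ⟨r, hr, hre⟩ := path_between_support qi hqi hx hy
  have : m = r := (hT.existsUnique_path _ _).unique hm hr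
  subst this
  exact ⟨qi, hqi, hre _ (hme j (by omega) (by omega))⟩

end Graph

open Classical in
theorem stmt18 {V : Type*} [Fintype V] [DecidableEq V] (G : SimpleGraph V)
    (hT : G.IsTree)
    (x : V × V → ℝ) (hx0 : ∀ ℓ, 0 ≤ x ℓ)
    (hedge : ∀ e ∈ G.edgeSet, 1 ≤ covWeight G x e)
    (hnode : ∀ (v : V) (e1 e2 e3 : Sym2 V), e1 ≠ e2 → e1 ≠ e3 → e2 ≠ e3 →
      (∀ e : Sym2 V, (e ∈ G.edgeSet ∧ v ∈ e) ↔ (e = e1 ∨ e = e2 ∨ e = e3)) →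
      2 ≤ tripleWeight G x e1 e2 e3)
    (P : Finset (Sym2 V)) (hPsub : ↑P ⊆ G.edgeSet)
    (hPdef : ∀ e ∈ P, covWeight G x e < 4/3)
    (hPall : ∀ e ∈ G.edgeSet, covWeight G x e < 4/3 → e ∈ P)
    (hpath : ∃ (u v : V) (w : G.Walk u v), w.IsPath ∧ w.edges.toFinset = P)
    (k : ℕ) (hk : 0 < k) (hint : ∀ ℓ, ∃ m : ℕ, 3 * (k : ℝ) * x ℓ = m) :
    ∃ col : V × V → Fin (2 * k) → ℕ,
      (∀ ℓ, ((∑ c : Fin (2 * k), col ℓ c : ℕ) : ℝ) ≤ 3 * (k : ℝ) * x ℓ) ∧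
      (∀ e ∈ P, ∀ c : Fin (2 * k),
        ∃ ℓ : V × V, Covers G ℓ.1 ℓ.2 e ∧ 0 < col ℓ c) := by
  obtain ⟨u, v, w, hw, hwP⟩ := hpath
  choose m hm using hint
  set cov : V × V → ℕ → Prop := fun ℓ i =>
    i < w.length ∧ Covers G ℓ.1 ℓ.2 s(w.getVert i, w.getVert (i + 1)) with hcovdef
  have hintv : ∀ ℓ i j l, i ≤ j → j ≤ l → cov ℓ i → cov ℓ l → cov ℓ j := by
    rintro ℓ i j l hij hjl ⟨hi, hci⟩ ⟨hl, hcl⟩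
    exact ⟨by omega, covers_interval hT w hw ℓ.1 ℓ.2 i j l hij hjl hl hci hcl⟩
  have hcovg : ∀ t < w.length,
      2 * k ≤ ∑ ℓ ∈ Finset.univ.filter (fun ℓ => cov ℓ t), m ℓ := by
    intro t ht
    have hadj : G.Adj (w.getVert t) (w.getVert (t + 1)) := w.adj_getVert_succ ht
    have hmem : s(w.getVert t, w.getVert (t + 1)) ∈ G.edgeSet := hadj
    have h1 : (1 : ℝ) ≤ covWeight G x s(w.getVert t, w.getVert (t + 1)) := hedge _ hmem
    rw [covWeight] at h1
    have hfe : Finset.univ.filter (fun ℓ : V × V => cov ℓ t) =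
        Finset.univ.filter (fun ℓ : V × V =>
          Covers G ℓ.1 ℓ.2 s(w.getVert t, w.getVert (t + 1))) := by
      apply Finset.filter_congr
      intro ℓ _
      simp [hcovdef, ht]
    rw [hfe]
    set S := Finset.univ.filter (fun ℓ : V × V =>
      Covers G ℓ.1 ℓ.2 s(w.getVert t, w.getVert (t + 1))) with hS
    have hsumr : ∑ ℓ ∈ S, (m ℓ : ℝ) = 3 * (k : ℝ) * ∑ ℓ ∈ S, x ℓ := by
      rw [Finset.mul_sum]
      exact Finset.sum_congr rfl fun ℓ _ => (hm ℓ).symm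
    have hk1 : (1 : ℝ) ≤ (k : ℝ) := by exact_mod_cast hk
    have : ((2 * k : ℕ) : ℝ) ≤ ((∑ ℓ ∈ S, m ℓ : ℕ) : ℝ) := by
      push_cast
      rw [hsumr]
      nlinarith
    exact_mod_cast this
  obtain ⟨A, hA1, hA2⟩ := greedy_coloring (K := 2 * k) (N := w.length) hintv
    (fun t ht => by
      have h := hcovg t ht
      rw [Finset.filter_congr_decidable] at h ⊢
      exact h)
  refine ⟨fun ℓ c => if c ∈ A ℓ then 1 else 0, fun ℓ => ?_, fun e heP c => ?_⟩
  · have hcardsum : (∑ c : Fin (2 * k), if c ∈ A ℓ then (1 : ℕ) else 0) = (A ℓ).card := by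
      rw [Finset.sum_ite_mem, Finset.univ_inter, Finset.sum_const, smul_eq_mul, mul_one]
    rw [hcardsum, hm ℓ]
    exact_mod_cast hA1 ℓ
  · have hew : e ∈ w.edges := by
      rw [← hwP] at heP
      exact List.mem_toFinset.mp heP
    obtain ⟨t, ht, rfl⟩ := (walk_mem_edges_iff_getVert w e).mp hew
    obtain ⟨ℓ, hcovℓ, hcA⟩ := hA2 t ht c
    exact ⟨ℓ, hcovℓ.2, by simp [hcA]⟩
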